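/- Let (X,Z) be a random vector with copula C and continuous marginals F, G, with Z integrable and symmetric around zero (G(-z) = 1 - G(z) for all z). If C(u,v) + C(u,1-v) ≥ u for all u,v ∈ [0,1], then Cov(X,Z) ≥ 0 (whenever the covariance exists). -/

import Mathlib

open MeasureTheory Set

lemma null_singleton_of_contCDF {Ω : Type*} [MeasurableSpace Ω] (μ : Measure Ω)
    [IsProbabilityMeasure μ] (W : Ω → ℝ) (hW : Measurable W) (H : ℝ → ℝ)
    (hH : ∀ x, H x = (μ {ω | W ω ≤ x}).toReal) (hcont : Continuous H) (a : ℝ) :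
    μ {ω | W ω = a} = 0 := by
  have key : ∀ ε > (0:ℝ), (μ {ω | W ω = a}).toReal ≤ H a - H (a - ε) := by
    intro ε hε
    have hsub : {ω | W ω ≤ a - ε} ⊆ {ω | W ω ≤ a} := fun ω h => by simp only [mem_setOf_eq] at *; linarith
    have h1 : {ω | W ω = a} ⊆ {ω | W ω ≤ a} \ {ω | W ω ≤ a - ε} := by
      intro ω h
      simp only [mem_setOf_eq] at h
      constructor <;> simp [mem_setOf_eq, h] <;> linarith
    have h2 : μ ({ω | W ω ≤ a} \ {ω | W ω ≤ a - ε}) =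
        μ {ω | W ω ≤ a} - μ {ω | W ω ≤ a - ε} :=
      measure_diff hsub (hW measurableSet_Iic).nullMeasurableSet (measure_ne_top μ _)
    calc (μ {ω | W ω = a}).toReal ≤ (μ ({ω | W ω ≤ a} \ {ω | W ω ≤ a - ε})).toReal := by
          exact ENNReal.toReal_mono (by rw [h2]; exact (tsub_le_self.trans_lt (measure_lt_top μ _)).ne) (measure_mono h1)
      _ = H a - H (a - ε) := by
          rw [h2, ENNReal.toReal_sub_of_le (measure_mono hsub) (measure_ne_top μ _), hH, hH]
  have htend : Filter.Tendsto (fun ε : ℝ => H a - H (a - ε)) (nhdsWithin 0 (Ioi 0)) (nhds 0) := by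
    have : Filter.Tendsto (fun ε : ℝ => H a - H (a - ε)) (nhds 0) (nhds (H a - H (a - 0))) :=
      Filter.Tendsto.sub tendsto_const_nhds ((hcont.tendsto _).comp (Filter.Tendsto.sub tendsto_const_nhds Filter.tendsto_id))
    simpa using this.mono_left nhdsWithin_le_nhds
  have hle : (μ {ω | W ω = a}).toReal ≤ 0 := by
    refine ge_of_tendsto htend ?_
    filter_upwards [self_mem_nhdsWithin] with ε hε using key ε hε
  have := ENNReal.toReal_nonneg (a := μ {ω | W ω = a})
  have h0 : (μ {ω | W ω = a}).toReal = 0 := le_antisymm hle this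
  exact (ENNReal.toReal_eq_zero_iff _).mp h0 |>.resolve_right (measure_ne_top μ _)

lemma layercake_pos {Ω : Type*} [MeasurableSpace Ω] (μ : Measure Ω)
    (Z : Ω → ℝ) (hZ : Measurable Z) :
    ∫⁻ ω, ENNReal.ofReal (Z ω) ∂μ = ∫⁻ t in Ioi (0:ℝ), μ {ω | t < Z ω} := by
  have h1 : ∫⁻ ω, ENNReal.ofReal (Z ω) ∂μ = ∫⁻ ω, ENNReal.ofReal (max (Z ω) 0) ∂μ := by
    apply lintegral_congr; intro ω
    rcases le_or_gt 0 (Z ω) with h | h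
    · rw [max_eq_left h]
    · rw [max_eq_right h.le, ENNReal.ofReal_eq_zero.2 h.le, ENNReal.ofReal_zero]
  rw [h1, lintegral_eq_lintegral_meas_lt (f := fun ω => max (Z ω) 0) μ
    (Filter.Eventually.of_forall fun ω => le_max_right _ _)
    ((hZ.max measurable_const).aemeasurable)]
  refine setLIntegral_congr_fun measurableSet_Ioi (fun t ht => ?_)
  congr 1
  ext ω
  simp only [mem_setOf_eq, lt_max_iff]
  exact ⟨fun h => h.resolve_right (not_lt.2 (le_of_lt ht)), Or.inl⟩

lemma layercake_neg_set {Ω : Type*} (Z : Ω → ℝ) (t : ℝ) :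
    {ω | t < -Z ω} = {ω | Z ω < -t} := by
  ext ω; simp only [mem_setOf_eq]; constructor <;> intro <;> linarith

lemma layercake_signed {Ω : Type*} [MeasurableSpace Ω] (μ : Measure Ω)
    (Z : Ω → ℝ) (hZ : Measurable Z) (hZint : Integrable Z μ) :
    ∫ ω, Z ω ∂μ = (∫⁻ t in Ioi (0:ℝ), μ {ω | t < Z ω}).toReal
      - (∫⁻ t in Ioi (0:ℝ), μ {ω | Z ω < -t}).toReal := by
  rw [integral_eq_lintegral_pos_part_sub_lintegral_neg_part hZint,
    layercake_pos μ Z hZ, layercake_pos μ (fun ω => - Z ω) hZ.neg]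
  simp only [layercake_neg_set]

lemma layercake_fin {Ω : Type*} [MeasurableSpace Ω] (μ : Measure Ω)
    (Z : Ω → ℝ) (hZ : Measurable Z) (hZint : Integrable Z μ) :
    (∫⁻ t in Ioi (0:ℝ), μ {ω | t < Z ω}) ≠ ⊤ ∧ (∫⁻ t in Ioi (0:ℝ), μ {ω | Z ω < -t}) ≠ ⊤ := by
  have hnorm : ∫⁻ ω, ENNReal.ofReal ‖Z ω‖ ∂μ < ⊤ := by
    have := hZint.2
    rwa [hasFiniteIntegral_iff_norm] at this
  constructor
  · rw [← layercake_pos μ Z hZ]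
    exact ((lintegral_mono fun ω => ENNReal.ofReal_le_ofReal (le_abs_self _)).trans_lt hnorm).ne
  · simp only [← layercake_neg_set]
    rw [← layercake_pos μ (fun ω => -Z ω) hZ.neg]
    refine ((lintegral_mono fun ω => ENNReal.ofReal_le_ofReal ?_).trans_lt hnorm).ne
    simp [neg_le_abs]

lemma oned_int (a z : ℝ) :
    Integrable ((Iio a).indicator (fun _ => z)) (volume.restrict (Ioi (0:ℝ))) := by
  rw [integrable_indicator_iff measurableSet_Iio]
  refine integrableOn_const (ne_of_lt ?_)
  rw [Measure.restrict_apply measurableSet_Iio]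
  exact lt_of_le_of_lt (measure_mono (by intro t ht; exact ⟨ht.2, ht.1⟩ : Iio a ∩ Ioi 0 ⊆ Ioo 0 a))
    measure_Ioo_lt_top

lemma oned_val (a z : ℝ) :
    (∫ t in Ioi (0:ℝ), (Iio a).indicator (fun _ => z) t) = max a 0 * z := by
  rw [integral_indicator measurableSet_Iio]
  rw [Measure.restrict_restrict measurableSet_Iio, setIntegral_const]
  have : Iio a ∩ Ioi (0:ℝ) = Ioo 0 a := by ext t; exact ⟨fun h => ⟨h.2, h.1⟩, fun h => ⟨h.2, h.1⟩⟩
  rw [this, measureReal_def, Real.volume_Ioo, smul_eq_mul, ENNReal.toReal_ofReal', sub_zero]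

lemma oned (c z : ℝ) :
    Integrable (fun t => (Iio c).indicator (fun _ => z) t - (Iio (-c)).indicator (fun _ => z) t)
      (volume.restrict (Ioi (0:ℝ))) ∧
    (∫ t in Ioi (0:ℝ), ((Iio c).indicator (fun _ => z) t - (Iio (-c)).indicator (fun _ => z) t))
      = c * z ∧
    (∫ t in Ioi (0:ℝ), ‖(Iio c).indicator (fun _ => z) t - (Iio (-c)).indicator (fun _ => z) t‖)
      = |c * z| := by
  refine ⟨(oned_int c z).sub (oned_int (-c) z), ?_, ?_⟩
  · rw [integral_sub (oned_int c z) (oned_int (-c) z), oned_val, oned_val, ← sub_mul]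
    congr 1
    rcases le_total 0 c with h | h
    · rw [max_eq_left h, max_eq_right (by linarith)]; ring
    · rw [max_eq_right h, max_eq_left (by linarith)]; ring
  · rcases le_total 0 c with h | h
    · have he : ∀ᵐ t ∂(volume.restrict (Ioi (0:ℝ))),
          ‖(Iio c).indicator (fun _ => z) t - (Iio (-c)).indicator (fun _ => z) t‖
            = (Iio c).indicator (fun _ => ‖z‖) t := by
        filter_upwards [ae_restrict_mem measurableSet_Ioi] with t ht
        rw [show (Iio (-c)).indicator (fun _ => z) t = 0 from indicator_of_notMem
            (by simp only [mem_Iio, not_lt]; linarith [mem_Ioi.1 ht]) _,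
          sub_zero, norm_indicator_eq_indicator_norm]
      rw [integral_congr_ae he, oned_val, max_eq_left h, abs_mul, Real.norm_eq_abs,
        abs_of_nonneg h]
    · have he : ∀ᵐ t ∂(volume.restrict (Ioi (0:ℝ))),
          ‖(Iio c).indicator (fun _ => z) t - (Iio (-c)).indicator (fun _ => z) t‖
            = (Iio (-c)).indicator (fun _ => ‖z‖) t := by
        filter_upwards [ae_restrict_mem measurableSet_Ioi] with t ht
        rw [show (Iio c).indicator (fun _ => z) t = 0 from indicator_of_notMem
            (by simp only [mem_Iio, not_lt]; linarith [mem_Ioi.1 ht]) _,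
          zero_sub, norm_neg, norm_indicator_eq_indicator_norm]
      rw [integral_congr_ae he, oned_val, max_eq_left (by linarith), abs_mul, Real.norm_eq_abs,
        abs_of_nonpos h]

/-- A (bivariate) copula: grounded, with uniform marginals, and 2-increasing. -/
structure IsCopula (C : ℝ → ℝ → ℝ) : Prop where
  grounded_fst : ∀ v ∈ Icc (0:ℝ) 1, C 0 v = 0
  grounded_snd : ∀ u ∈ Icc (0:ℝ) 1, C u 0 = 0
  margin_fst : ∀ u ∈ Icc (0:ℝ) 1, C u 1 = u
  margin_snd : ∀ v ∈ Icc (0:ℝ) 1, C 1 v = v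
  twoIncreasing : ∀ u₁ u₂ v₁ v₂ : ℝ, u₁ ∈ Icc (0:ℝ) 1 → u₂ ∈ Icc (0:ℝ) 1 →
    v₁ ∈ Icc (0:ℝ) 1 → v₂ ∈ Icc (0:ℝ) 1 → u₁ ≤ u₂ → v₁ ≤ v₂ →
    C u₁ v₂ + C u₂ v₁ ≤ C u₁ v₁ + C u₂ v₂

/-- If `(X,Z)` has copula `C` with continuous marginals, `Z` is integrable and
symmetric around zero, and `C(u,v) + C(u,1-v) ≥ u` (wPQD), then `Cov(X,Z) ≥ 0`. -/
theorem stmt16 {Ω : Type*} [MeasurableSpace Ω] (μ : Measure Ω) [IsProbabilityMeasure μ]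
    (X Z : Ω → ℝ) (hX : Measurable X) (hZmeas : Measurable Z)
    (hXint : Integrable X μ) (hZint : Integrable Z μ)
    (hXZint : Integrable (fun ω => X ω * Z ω) μ)
    (C : ℝ → ℝ → ℝ) (hC : IsCopula C)
    (F G : ℝ → ℝ)
    (hF : ∀ x : ℝ, F x = (μ {ω | X ω ≤ x}).toReal)
    (hG : ∀ z : ℝ, G z = (μ {ω | Z ω ≤ z}).toReal)
    (hFcont : Continuous F) (hGcont : Continuous G)
    (hjoint : ∀ x z : ℝ, (μ {ω | X ω ≤ x ∧ Z ω ≤ z}).toReal = C (F x) (G z))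
    (hsymm : ∀ z : ℝ, G (-z) = 1 - G z)
    (hwPQD : ∀ u ∈ Icc (0:ℝ) 1, ∀ v ∈ Icc (0:ℝ) 1, u ≤ C u v + C u (1 - v)) :
    0 ≤ (∫ ω, X ω * Z ω ∂μ) - (∫ ω, X ω ∂μ) * (∫ ω, Z ω ∂μ) := by
  -- basic facts
  have hmem : ∀ (s : Set Ω), (μ s).toReal ∈ Icc (0:ℝ) 1 := fun s =>
    ⟨ENNReal.toReal_nonneg, by
      rw [← ENNReal.toReal_one]; exact ENNReal.toReal_mono ENNReal.one_ne_top prob_le_one⟩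
  have hXatom : ∀ a : ℝ, μ {ω | X ω = a} = 0 :=
    null_singleton_of_contCDF μ X hX F hF hFcont
  have hZatom : ∀ a : ℝ, μ {ω | Z ω = a} = 0 :=
    null_singleton_of_contCDF μ Z hZmeas G hG hGcont
  have hAle : ∀ x : ℝ, MeasurableSet {ω | X ω ≤ x} := fun x => hX measurableSet_Iic
  have hZle : ∀ a : ℝ, MeasurableSet {ω | Z ω ≤ a} := fun a => hZmeas measurableSet_Iic
  have hZltmeas : ∀ a : ℝ, MeasurableSet {ω | Z ω < a} := fun a => hZmeas measurableSet_Iio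
  have hZgt : ∀ a : ℝ, MeasurableSet {ω | a < Z ω} := fun a => hZmeas measurableSet_Ioi
  -- removing atoms from inequalities on intersections
  have hinter : ∀ (A : Set Ω) (a : ℝ), μ (A ∩ {ω | Z ω < a}) = μ (A ∩ {ω | Z ω ≤ a}) := by
    intro A a
    refine le_antisymm (measure_mono (by intro ω h; simp only [mem_inter_iff, mem_setOf_eq] at *; exact ⟨h.1, le_of_lt h.2⟩)) ?_
    calc μ (A ∩ {ω | Z ω ≤ a}) ≤ μ ((A ∩ {ω | Z ω < a}) ∪ {ω | Z ω = a}) := by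
          refine measure_mono fun ω h => ?_
          have hz : Z ω ≤ a := h.2
          rcases lt_or_eq_of_le hz with h' | h'
          · exact Or.inl ⟨h.1, h'⟩
          · exact Or.inr h'
      _ ≤ μ (A ∩ {ω | Z ω < a}) + μ {ω | Z ω = a} := measure_union_le _ _
      _ = μ (A ∩ {ω | Z ω < a}) := by rw [hZatom, add_zero]
  -- symmetry of the law of Z
  have hzlaw : ∀ t : ℝ, μ {ω | t < Z ω} = μ {ω | Z ω < -t} := by
    intro t
    have h1 : {ω | t < Z ω} = {ω | Z ω ≤ t}ᶜ := by ext ω; simp [not_le]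
    have h2 : (μ {ω | Z ω ≤ t}ᶜ).toReal = 1 - G t := by
      rw [measure_compl (hZle t) (measure_ne_top μ _),
        ENNReal.toReal_sub_of_le (measure_mono (subset_univ _)) (measure_ne_top μ _),
        measure_univ, ENNReal.toReal_one, hG]
    have h3 : μ {ω | Z ω < -t} = μ {ω | Z ω ≤ -t} := by
      have := hinter univ (-t); simpa using this
    refine (ENNReal.toReal_eq_toReal_iff' (measure_ne_top μ _) (measure_ne_top μ _)).1 ?_
    rw [h1, h2, h3, ← hG, hsymm]
  -- E Z = 0
  have hEZ : ∫ ω, Z ω ∂μ = 0 := by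
    rw [layercake_signed μ Z hZmeas hZint]
    have : (∫⁻ t in Ioi (0:ℝ), μ {ω | t < Z ω}) = ∫⁻ t in Ioi (0:ℝ), μ {ω | Z ω < -t} :=
      lintegral_congr fun t => hzlaw t
    rw [this, sub_self]
  -- key measure inequality from wPQD
  have hkey : ∀ (x t : ℝ), 0 < t →
      μ ({ω | X ω ≤ x} ∩ {ω | t < Z ω}) ≤ μ ({ω | X ω ≤ x} ∩ {ω | Z ω < -t}) := by
    intro x t ht
    have hjt : (μ ({ω | X ω ≤ x} ∩ {ω | Z ω ≤ t})).toReal = C (F x) (G t) := by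
      rw [← hjoint x t]; congr 1
    have hjmt : (μ ({ω | X ω ≤ x} ∩ {ω | Z ω ≤ -t})).toReal = C (F x) (1 - G t) := by
      rw [← hsymm, ← hjoint x (-t)]; congr 1
    have hw := hwPQD (F x) (by rw [hF]; exact hmem _) (G t) (by rw [hG]; exact hmem _)
    have hsplit : μ ({ω | X ω ≤ x} ∩ {ω | Z ω ≤ t}) + μ ({ω | X ω ≤ x} ∩ {ω | t < Z ω})
        = μ {ω | X ω ≤ x} := by
      rw [← measure_union (Disjoint.inter_left' _ (Disjoint.inter_right' _
        (by rw [Set.disjoint_left]; intro ω h1 h2; simp only [mem_setOf_eq] at h1 h2; exact absurd h1 (not_le.2 h2))))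
        ((hAle x).inter (hZgt t))]
      congr 1
      ext ω
      simp only [mem_union, mem_inter_iff, mem_setOf_eq]
      constructor
      · rintro (⟨h, _⟩ | ⟨h, _⟩) <;> exact h
      · intro h; rcases le_or_gt (Z ω) t with h' | h'
        · exact Or.inl ⟨h, h'⟩
        · exact Or.inr ⟨h, h'⟩
    have htr : (μ ({ω | X ω ≤ x} ∩ {ω | t < Z ω})).toReal
        ≤ (μ ({ω | X ω ≤ x} ∩ {ω | Z ω < -t})).toReal := by
      have hsplit' : C (F x) (G t) + (μ ({ω | X ω ≤ x} ∩ {ω | t < Z ω})).toReal = F x := by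
        rw [← hjt, ← ENNReal.toReal_add (measure_ne_top μ _) (measure_ne_top μ _), hsplit, hF]
      rw [hinter]
      rw [hjmt]
      linarith
    exact (ENNReal.toReal_le_toReal (measure_ne_top μ _) (measure_ne_top μ _)).1 htr
  -- the partial expectation is nonpositive
  have hg_nonpos : ∀ x : ℝ, (∫ ω in {ω | X ω ≤ x}, Z ω ∂μ) ≤ 0 := by
    intro x
    rw [layercake_signed (μ.restrict {ω | X ω ≤ x}) Z hZmeas hZint.restrict]
    rw [sub_nonpos]
    have hfin := layercake_fin (μ.restrict {ω | X ω ≤ x}) Z hZmeas hZint.restrict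
    refine ENNReal.toReal_mono hfin.2 (lintegral_mono_ae ?_)
    filter_upwards [ae_restrict_mem measurableSet_Ioi] with t ht
    rw [Measure.restrict_apply (hZgt t), Measure.restrict_apply (hZltmeas (-t)),
      inter_comm, inter_comm {ω | Z ω < -t}]
    exact hkey x t ht
  -- tail partial expectations
  have hgt_nonneg : ∀ t : ℝ, 0 ≤ ∫ ω in {ω | t < X ω}, Z ω ∂μ := by
    intro t
    have hc := integral_add_compl (hAle t) hZint (f := Z)
    have hcs : {ω | X ω ≤ t}ᶜ = {ω | t < X ω} := by ext ω; simp [not_le]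
    rw [hcs, hEZ] at hc
    linarith [hg_nonpos t]
  have hlt_nonpos : ∀ t : ℝ, (∫ ω in {ω | X ω < t}, Z ω ∂μ) ≤ 0 := by
    intro t
    have hae : {ω | X ω < t} =ᵐ[μ] {ω | X ω ≤ t} := by
      rw [ae_eq_set]
      constructor
      · have he : {ω | X ω < t} \ {ω | X ω ≤ t} = ∅ := by
          ext ω
          simp only [mem_diff, mem_setOf_eq, mem_empty_iff_false, iff_false, not_and, not_not]
          exact fun h => le_of_lt h
        simp [he]
      · refine measure_mono_null (fun ω h => ?_) (hXatom t)
        have h1 : X ω ≤ t := h.1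
        have h2 : ¬ X ω < t := h.2
        exact le_antisymm h1 (not_lt.1 h2)
    rw [setIntegral_congr_set hae]
    exact hg_nonpos t
  -- The product function
  set f : Ω × ℝ → ℝ := fun p =>
    (Iio (X p.1)).indicator (fun _ => Z p.1) p.2
      - (Iio (-(X p.1))).indicator (fun _ => Z p.1) p.2 with hf_def
  have hfmeas : Measurable f := by
    have h1 : MeasurableSet {p : Ω × ℝ | p.2 < X p.1} :=
      measurableSet_lt measurable_snd (hX.comp measurable_fst)
    have h2 : MeasurableSet {p : Ω × ℝ | p.2 < -(X p.1)} :=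
      measurableSet_lt measurable_snd (hX.comp measurable_fst).neg
    have : f = fun p => (if p.2 < X p.1 then Z p.1 else 0)
        - (if p.2 < -(X p.1) then Z p.1 else 0) := by
      funext p; simp [hf_def, indicator_apply]
    rw [this]
    exact (Measurable.ite h1 (hZmeas.comp measurable_fst) measurable_const).sub
      (Measurable.ite h2 (hZmeas.comp measurable_fst) measurable_const)
  have hfint : Integrable f (μ.prod (volume.restrict (Ioi (0:ℝ)))) := by
    refine (integrable_prod_iff hfmeas.aestronglyMeasurable).2 ⟨?_, ?_⟩
    · exact Filter.Eventually.of_forall fun ω => (oned (X ω) (Z ω)).1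
    · have : (fun (ω : Ω) => ∫ t in Ioi (0:ℝ), ‖f (ω, t)‖) = fun ω => |X ω * Z ω| :=
        funext fun ω => (oned (X ω) (Z ω)).2.2
      rw [this]
      exact hXZint.abs
  have hswap := integral_integral_swap (f := fun ω t => f (ω, t)) hfint
  have hleft : (∫ ω, (∫ t in Ioi (0:ℝ), f (ω, t)) ∂μ) = ∫ ω, X ω * Z ω ∂μ :=
    integral_congr_ae (Filter.Eventually.of_forall fun ω => (oned (X ω) (Z ω)).2.1)
  have hright : 0 ≤ ∫ t in Ioi (0:ℝ), ∫ ω, f (ω, t) ∂μ := by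
    refine setIntegral_nonneg measurableSet_Ioi fun t ht => ?_
    have heq : (∫ ω, f (ω, t) ∂μ) = (∫ ω in {ω | t < X ω}, Z ω ∂μ)
        - ∫ ω in {ω | X ω < -t}, Z ω ∂μ := by
      have h1 : (fun ω => f (ω, t)) = fun ω =>
          ({ω | t < X ω}.indicator Z ω) - ({ω | X ω < -t}.indicator Z ω) := by
        funext ω
        simp only [hf_def, indicator_apply, mem_Iio, mem_setOf_eq]
        congr 1
        exact if_congr (by constructor <;> intro <;> linarith) rfl rfl
      have m1 : MeasurableSet {ω | t < X ω} := hX measurableSet_Ioi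
      have m2 : MeasurableSet {ω | X ω < -t} := hX measurableSet_Iio
      rw [h1, integral_sub (hZint.indicator m1) (hZint.indicator m2),
        integral_indicator m1, integral_indicator m2]
    rw [heq]
    linarith [hgt_nonneg t, hlt_nonpos (-t)]
  rw [hEZ, mul_zero, sub_zero, ← hleft, hswap]
  exact hright
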